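/- Let p be a polynomial in n real variables that is homogeneous of degree N ≥ 1, all of whose coefficients are nonnegative. Let e = (1, …, 1) ∈ ℝⁿ. Assume p(e) > 0 and that there exists k > 0 with ∂p/∂x₁(e) = ∂p/∂x₂(e) = ⋯ = ∂p/∂xₙ(e) = k. Then there exists a constant c > 0 such that p(x)^{1/N} ≥ c·(x₁·x₂⋯xₙ)^{1/n} for every x ∈ ℝⁿ with xⱼ > 0 for all j. -/

import Mathlib

open MvPolynomial

lemma eval_one_pderiv {n : ℕ} (p : MvPolynomial (Fin n) ℝ) (j : Fin n) :
    eval (fun _ => (1 : ℝ)) (pderiv j p) =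
      ∑ m ∈ p.support, p.coeff m * (m j : ℝ) := by
  conv_lhs => rw [p.as_sum]
  rw [map_sum, map_sum]
  refine Finset.sum_congr rfl fun m hm => ?_
  rw [pderiv_monomial, eval_monomial]
  simp [Finsupp.prod]

/-- Gurvits' theorem: a homogeneous polynomial with nonnegative coefficients,
positive at `e = (1,…,1)` and with all partial derivatives at `e` equal,
dominates a multiple of the geometric mean on the positive octant. -/
theorem gurvits_determinant_domination
    {n N : ℕ} (hN : 1 ≤ N) (p : MvPolynomial (Fin n) ℝ)
    (hhom : p.IsHomogeneous N)
    (hcoeff : ∀ m, 0 ≤ p.coeff m)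
    (hpe : 0 < eval (fun _ => (1 : ℝ)) p)
    (k : ℝ) (hk : 0 < k)
    (hderiv : ∀ j, eval (fun _ => (1 : ℝ)) (pderiv j p) = k) :
    ∃ c > (0 : ℝ), ∀ x : Fin n → ℝ, (∀ j, 0 < x j) →
      c * (∏ j, x j) ^ ((1 : ℝ) / n) ≤ (eval x p) ^ ((1 : ℝ) / N) := by
  set S : ℝ := eval (fun _ => (1 : ℝ)) p with hSdef
  -- S as a sum of coefficients
  have hS : S = ∑ m ∈ p.support, p.coeff m := by
    rw [hSdef, eval_eq']
    simp
  -- partial derivative identity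
  have hpd : ∀ j, ∑ m ∈ p.support, p.coeff m * (m j : ℝ) = k := fun j => by
    rw [← eval_one_pderiv p j, hderiv j]
  -- degrees of monomials
  have hdeg : ∀ m ∈ p.support, ∑ j : Fin n, m j = N := by
    intro m hm
    have h1 : Finsupp.weight 1 m = N := hhom (mem_support_iff.mp hm)
    change Finsupp.weight (fun _ => 1) m = N at h1
    rw [← Finsupp.degree_eq_weight_one] at h1
    rw [← h1, Finsupp.degree_eq_sum]
  -- Euler identity
  have hEuler : (n : ℝ) * k = (N : ℝ) * S := by
    have : ∑ j : Fin n, ∑ m ∈ p.support, p.coeff m * (m j : ℝ) = (n : ℝ) * k := by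
      simp [hpd]
    rw [← this, Finset.sum_comm]
    rw [hS, Finset.mul_sum]
    refine Finset.sum_congr rfl fun m hm => ?_
    rw [← Finset.mul_sum]
    have : ∑ j : Fin n, (m j : ℝ) = (N : ℝ) := by
      rw [← Nat.cast_sum, hdeg m hm]
    rw [this]; ring
  have hnpos : 0 < n := by
    by_contra h
    push_neg at h
    have hn0 : n = 0 := Nat.le_zero.mp h
    rw [hn0] at hEuler
    simp at hEuler
    rcases hEuler with h1 | h1
    · omega
    · linarith
  have hNpos : (0 : ℝ) < N := by exact_mod_cast Nat.lt_of_lt_of_le Nat.zero_lt_one hN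
  have hnR : (0 : ℝ) < n := by exact_mod_cast hnpos
  have hkS : k / S = (N : ℝ) / n := by
    field_simp
    linarith [hEuler]
  refine ⟨S ^ ((1 : ℝ) / N), Real.rpow_pos_of_pos hpe _, fun x hx => ?_⟩
  -- the main AM-GM step : S * ∏ j, x j ^ (N/n : ℝ) ≤ eval x p
  have key : S * ∏ j, x j ^ ((N : ℝ) / n) ≤ eval x p := by
    have amgm := Real.geom_mean_le_arith_mean_weighted p.support
      (fun m => p.coeff m / S) (fun m => ∏ j, x j ^ (m j))
      (fun m _ => div_nonneg (hcoeff m) hpe.le)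
      (by rw [← Finset.sum_div, ← hS, div_self hpe.ne'])
      (fun m _ => Finset.prod_nonneg fun j _ => (pow_nonneg (hx j).le _))
    have hrhs : ∑ m ∈ p.support, p.coeff m / S * ∏ j, x j ^ (m j)
        = eval x p / S := by
      rw [eval_eq', Finset.sum_div]
      exact Finset.sum_congr rfl fun m _ => by ring
    have hlhs : ∏ m ∈ p.support, (∏ j, x j ^ (m j)) ^ (p.coeff m / S)
        = ∏ j, x j ^ ((N : ℝ) / n) := by
      have step1 : ∀ m ∈ p.support, (∏ j, x j ^ (m j)) ^ (p.coeff m / S)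
          = ∏ j, x j ^ ((m j : ℝ) * (p.coeff m / S)) := by
        intro m _
        rw [← Real.finset_prod_rpow _ _ (fun j _ => pow_nonneg (hx j).le _)]
        refine Finset.prod_congr rfl fun j _ => ?_
        rw [← Real.rpow_natCast (x j) (m j), ← Real.rpow_mul (hx j).le]
      rw [Finset.prod_congr rfl step1, Finset.prod_comm]
      refine Finset.prod_congr rfl fun j _ => ?_
      rw [← Real.rpow_sum_of_pos (hx j)]
      congr 1
      rw [← hkS, ← hpd j, Finset.sum_div]
      exact Finset.sum_congr rfl fun m _ => by ring
    rw [hlhs, hrhs] at amgm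
    rw [mul_comm]
    exact (le_div_iff₀ hpe).mp amgm
  -- take (1/N)-th powers
  have hprod_pos : 0 < ∏ j, x j := Finset.prod_pos fun j _ => hx j
  have hL : 0 ≤ S * ∏ j, x j ^ ((N : ℝ) / n) :=
    mul_nonneg hpe.le (Finset.prod_nonneg fun j _ => Real.rpow_nonneg (hx j).le _)
  have := Real.rpow_le_rpow hL key (by positivity : (0:ℝ) ≤ 1 / N)
  calc S ^ ((1:ℝ)/N) * (∏ j, x j) ^ ((1:ℝ)/n)
      = (S * ∏ j, x j ^ ((N : ℝ) / n)) ^ ((1:ℝ)/N) := by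
        rw [Real.mul_rpow hpe.le (Finset.prod_nonneg fun j _ =>
          Real.rpow_nonneg (hx j).le _)]
        congr 1
        rw [Real.finset_prod_rpow _ _ (fun j _ => (hx j).le),
          ← Real.rpow_mul hprod_pos.le]
        congr 1
        field_simp
    _ ≤ (eval x p) ^ ((1:ℝ)/N) := this
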